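/- Let G be the graph on the integers whose edge set is the union of two families of pairs: {(i_1+ℓ, j_1+ℓ) : 0 ≤ ℓ < m_1} and {(i_2+ℓ, j_2+ℓ) : 0 ≤ ℓ < m_2}, with i_1 < j_1 and i_2 < j_2. Write I_a = {i_a,…,i_a+m_a−1} and J_a = {j_a,…,j_a+m_a−1}. Then G is acyclic if I_1 ∩ I_2 = ∅, or if J_1 ∩ J_2 = ∅, or if (I_1 ∪ I_2) ∩ (J_1 ∪ J_2) = ∅ and j_2 − i_2 ≠ j_1 − i_1. -/

import Mathlib

open SimpleGraph

lemma acyclic_of_orient {V : Type*} [DecidableEq V] (G : SimpleGraph V) (d : V → V) (f : V → ℤ)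
    (h : ∀ a b, G.Adj a b → (b = d a ∧ f a < f b) ∨ (a = d b ∧ f b < f a)) :
    G.IsAcyclic := by
  have key : ∀ (a : V) (c : G.Walk a a), c.IsCycle → (∀ x ∈ c.support, f a ≤ f x) → False := by
    intro a c hcyc hmin
    cases c with
    | nil => exact SimpleGraph.Walk.IsCycle.not_of_nil hcyc
    | @cons _ b _ hadj q =>
      have hb : b ∈ (SimpleGraph.Walk.cons hadj q).support := by
        rw [SimpleGraph.Walk.support_cons]
        exact List.mem_cons_of_mem _ q.start_mem_support
      obtain ⟨hbda, hfb⟩ := (h a b hadj).resolve_right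
        (fun ⟨_, hlt⟩ => absurd hlt (not_lt.2 (hmin b hb)))
      have hqne : q.darts ≠ [] := by
        intro hnil
        have h3 := hcyc.three_le_length
        have : q.length = 0 := by rw [← SimpleGraph.Walk.length_darts, hnil]; rfl
        simp [SimpleGraph.Walk.length_cons, this] at h3
      set D := q.darts.getLast hqne with hD
      have hDmem : D ∈ q.darts := List.getLast_mem hqne
      have hDsnd : D.snd = a := by rw [hD, SimpleGraph.Walk.getLast_darts_eq_lastDart]; rfl
      have hadj2 : G.Adj D.fst a := hDsnd ▸ D.adj
      have hfstmem : D.fst ∈ (SimpleGraph.Walk.cons hadj q).support := by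
        rw [SimpleGraph.Walk.support_cons]
        exact List.mem_cons_of_mem _ (q.dart_fst_mem_support_of_mem_darts hDmem)
      obtain ⟨hfda, hfu⟩ := (h D.fst a hadj2).resolve_left
        (fun ⟨_, hlt⟩ => absurd hlt (not_lt.2 (hmin _ hfstmem)))
      have hfb' : D.fst = b := by rw [hfda, ← hbda]
      have hedge : s(a, b) ∈ q.edges := by
        have hmem : D.edge ∈ q.edges := List.mem_map_of_mem hDmem
        have hprod : D.toProd = (b, a) := Prod.ext hfb' hDsnd
        have heq : D.edge = s(a, b) := by
          rw [SimpleGraph.Dart.edge, hprod]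
          exact Sym2.eq_swap
        rwa [heq] at hmem
      have hnodup := hcyc.isCircuit.isTrail.edges_nodup
      rw [SimpleGraph.Walk.edges_cons] at hnodup
      exact (List.nodup_cons.1 hnodup).1 hedge
  intro v p hp
  obtain ⟨a, ha, hmin⟩ := p.support.toFinset.exists_min_image f
    ⟨v, by simp [p.start_mem_support]⟩
  rw [List.mem_toFinset] at ha
  refine key a (p.rotate a ha) (hp.rotate ha) ?_
  intro x hx
  apply hmin
  rw [List.mem_toFinset]
  rcases (SimpleGraph.Walk.mem_support_iff _).1 hx with rfl | hx'
  · exact ha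
  · exact List.mem_of_mem_tail (((p.support_rotate a ha).mem_iff).1 hx')

/-- Let `G` be the graph on the integers whose edges are the union of the two
families `{i₁+ℓ, j₁+ℓ}` (`0 ≤ ℓ < m₁`) and `{i₂+ℓ, j₂+ℓ}` (`0 ≤ ℓ < m₂`),
with `i₁ < j₁` and `i₂ < j₂`.  Write `I_a = [i_a, i_a+m_a)`,
`J_a = [j_a, j_a+m_a)`.  Then `G` is acyclic if `I₁ ∩ I₂ = ∅`, or
`J₁ ∩ J₂ = ∅`, or (`(I₁ ∪ I₂) ∩ (J₁ ∪ J₂) = ∅` and `j₂ − i₂ ≠ j₁ − i₁`). -/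
theorem stmt10 (i₁ j₁ m₁ i₂ j₂ m₂ : ℕ) (h1 : i₁ < j₁) (h2 : i₂ < j₂)
    (hcase :
      Disjoint (Finset.Ico i₁ (i₁ + m₁)) (Finset.Ico i₂ (i₂ + m₂)) ∨
      Disjoint (Finset.Ico j₁ (j₁ + m₁)) (Finset.Ico j₂ (j₂ + m₂)) ∨
      (Disjoint (Finset.Ico i₁ (i₁ + m₁) ∪ Finset.Ico i₂ (i₂ + m₂))
          (Finset.Ico j₁ (j₁ + m₁) ∪ Finset.Ico j₂ (j₂ + m₂)) ∧
        j₂ - i₂ ≠ j₁ - i₁)) :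
    (SimpleGraph.fromRel (fun a b : ℕ =>
        (∃ ℓ < m₁, a = i₁ + ℓ ∧ b = j₁ + ℓ) ∨
        (∃ ℓ < m₂, a = i₂ + ℓ ∧ b = j₂ + ℓ))).IsAcyclic := by
  have main : ∀ (d : ℕ → ℕ) (f : ℕ → ℤ),
      (∀ a b : ℕ, ((∃ ℓ < m₁, a = i₁ + ℓ ∧ b = j₁ + ℓ) ∨
          (∃ ℓ < m₂, a = i₂ + ℓ ∧ b = j₂ + ℓ)) →
        (b = d a ∧ f a < f b) ∨ (a = d b ∧ f b < f a)) →
      (SimpleGraph.fromRel (fun a b : ℕ =>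
        (∃ ℓ < m₁, a = i₁ + ℓ ∧ b = j₁ + ℓ) ∨
        (∃ ℓ < m₂, a = i₂ + ℓ ∧ b = j₂ + ℓ))).IsAcyclic := by
    intro d f hK
    apply acyclic_of_orient _ d f
    intro a b hab
    rw [SimpleGraph.fromRel_adj] at hab
    rcases hab.2 with h' | h'
    · exact hK a b h'
    · exact (hK b a h').symm
  rcases hcase with hc | hc | ⟨hdisj, hne⟩
  · -- I₁ ∩ I₂ = ∅ : orient upward from the i-endpoint
    refine main (fun x => if x ∈ Finset.Ico i₁ (i₁ + m₁) then x + (j₁ - i₁) else x + (j₂ - i₂))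
      (fun n => (n : ℤ)) ?_
    rintro a b (⟨ℓ, hℓ, rfl, rfl⟩ | ⟨ℓ, hℓ, rfl, rfl⟩)
    · have hmem : i₁ + ℓ ∈ Finset.Ico i₁ (i₁ + m₁) := Finset.mem_Ico.2 ⟨by omega, by beta_reduce; omega⟩
      exact Or.inl ⟨by beta_reduce; rw [if_pos hmem]; omega, by beta_reduce; omega⟩
    · have hmem : i₂ + ℓ ∉ Finset.Ico i₁ (i₁ + m₁) :=
        fun hx => Finset.disjoint_left.1 hc hx (Finset.mem_Ico.2 ⟨by omega, by beta_reduce; omega⟩)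
      exact Or.inl ⟨by beta_reduce; rw [if_neg hmem]; omega, by beta_reduce; omega⟩
  · -- J₁ ∩ J₂ = ∅ : orient downward from the j-endpoint
    refine main (fun x => if x ∈ Finset.Ico j₁ (j₁ + m₁) then x - (j₁ - i₁) else x - (j₂ - i₂))
      (fun n => -(n : ℤ)) ?_
    rintro a b (⟨ℓ, hℓ, rfl, rfl⟩ | ⟨ℓ, hℓ, rfl, rfl⟩)
    · have hmem : j₁ + ℓ ∈ Finset.Ico j₁ (j₁ + m₁) := Finset.mem_Ico.2 ⟨by omega, by beta_reduce; omega⟩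
      exact Or.inr ⟨by beta_reduce; rw [if_pos hmem]; omega, by beta_reduce; omega⟩
    · have hmem : j₂ + ℓ ∉ Finset.Ico j₁ (j₁ + m₁) :=
        fun hx => Finset.disjoint_left.1 hc hx (Finset.mem_Ico.2 ⟨by omega, by beta_reduce; omega⟩)
      exact Or.inr ⟨by beta_reduce; rw [if_neg hmem]; omega, by beta_reduce; omega⟩
  · -- (I₁ ∪ I₂) ∩ (J₁ ∪ J₂) = ∅ and j₂ - i₂ ≠ j₁ - i₁
    have hJ1 : ∀ x, x ∈ Finset.Ico j₁ (j₁ + m₁) →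
        x ∉ Finset.Ico i₁ (i₁ + m₁) ∪ Finset.Ico i₂ (i₂ + m₂) :=
      fun x hx => Finset.disjoint_right.1 hdisj (Finset.mem_union_left _ hx)
    have hJ2 : ∀ x, x ∈ Finset.Ico j₂ (j₂ + m₂) →
        x ∉ Finset.Ico i₁ (i₁ + m₁) ∪ Finset.Ico i₂ (i₂ + m₂) :=
      fun x hx => Finset.disjoint_right.1 hdisj (Finset.mem_union_right _ hx)
    rcases hne.lt_or_gt with hlt | hlt
    · -- j₂ - i₂ < j₁ - i₁ : orient family 1 up (I→J), family 2 down (J→I)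
      refine main (fun x => if x ∈ Finset.Ico i₁ (i₁ + m₁) then x + (j₁ - i₁) else x - (j₂ - i₂))
        (fun x => if x ∈ Finset.Ico i₁ (i₁ + m₁) ∪ Finset.Ico i₂ (i₂ + m₂) then 2 * (x : ℤ)
          else 2 * (x : ℤ) - ((j₁ - i₁ : ℕ) : ℤ) - ((j₂ - i₂ : ℕ) : ℤ)) ?_
      rintro a b (⟨ℓ, hℓ, rfl, rfl⟩ | ⟨ℓ, hℓ, rfl, rfl⟩)
      · have hmI : i₁ + ℓ ∈ Finset.Ico i₁ (i₁ + m₁) := Finset.mem_Ico.2 ⟨by omega, by beta_reduce; omega⟩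
        have hmU : i₁ + ℓ ∈ Finset.Ico i₁ (i₁ + m₁) ∪ Finset.Ico i₂ (i₂ + m₂) :=
          Finset.mem_union_left _ hmI
        have hbJ : j₁ + ℓ ∉ Finset.Ico i₁ (i₁ + m₁) ∪ Finset.Ico i₂ (i₂ + m₂) :=
          hJ1 _ (Finset.mem_Ico.2 ⟨by omega, by beta_reduce; omega⟩)
        refine Or.inl ⟨by beta_reduce; rw [if_pos hmI]; omega, ?_⟩
        beta_reduce
        rw [if_pos hmU, if_neg hbJ]
        omega
      · have hmU : i₂ + ℓ ∈ Finset.Ico i₁ (i₁ + m₁) ∪ Finset.Ico i₂ (i₂ + m₂) :=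
          Finset.mem_union_right _ (Finset.mem_Ico.2 ⟨by omega, by beta_reduce; omega⟩)
        have hbJ : j₂ + ℓ ∉ Finset.Ico i₁ (i₁ + m₁) ∪ Finset.Ico i₂ (i₂ + m₂) :=
          hJ2 _ (Finset.mem_Ico.2 ⟨by omega, by beta_reduce; omega⟩)
        have hbI1 : j₂ + ℓ ∉ Finset.Ico i₁ (i₁ + m₁) :=
          fun hx => hbJ (Finset.mem_union_left _ hx)
        refine Or.inr ⟨by beta_reduce; rw [if_neg hbI1]; omega, ?_⟩
        beta_reduce
        rw [if_pos hmU, if_neg hbJ]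
        omega
    · -- j₁ - i₁ < j₂ - i₂ : orient family 2 up (I→J), family 1 down (J→I)
      refine main (fun x => if x ∈ Finset.Ico i₂ (i₂ + m₂) then x + (j₂ - i₂) else x - (j₁ - i₁))
        (fun x => if x ∈ Finset.Ico i₁ (i₁ + m₁) ∪ Finset.Ico i₂ (i₂ + m₂) then 2 * (x : ℤ)
          else 2 * (x : ℤ) - ((j₁ - i₁ : ℕ) : ℤ) - ((j₂ - i₂ : ℕ) : ℤ)) ?_
      rintro a b (⟨ℓ, hℓ, rfl, rfl⟩ | ⟨ℓ, hℓ, rfl, rfl⟩)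
      · have hmU : i₁ + ℓ ∈ Finset.Ico i₁ (i₁ + m₁) ∪ Finset.Ico i₂ (i₂ + m₂) :=
          Finset.mem_union_left _ (Finset.mem_Ico.2 ⟨by omega, by beta_reduce; omega⟩)
        have hbJ : j₁ + ℓ ∉ Finset.Ico i₁ (i₁ + m₁) ∪ Finset.Ico i₂ (i₂ + m₂) :=
          hJ1 _ (Finset.mem_Ico.2 ⟨by omega, by beta_reduce; omega⟩)
        have hbI2 : j₁ + ℓ ∉ Finset.Ico i₂ (i₂ + m₂) :=
          fun hx => hbJ (Finset.mem_union_right _ hx)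
        refine Or.inr ⟨by beta_reduce; rw [if_neg hbI2]; omega, ?_⟩
        beta_reduce
        rw [if_pos hmU, if_neg hbJ]
        omega
      · have hmI : i₂ + ℓ ∈ Finset.Ico i₂ (i₂ + m₂) := Finset.mem_Ico.2 ⟨by omega, by beta_reduce; omega⟩
        have hmU : i₂ + ℓ ∈ Finset.Ico i₁ (i₁ + m₁) ∪ Finset.Ico i₂ (i₂ + m₂) :=
          Finset.mem_union_right _ hmI
        have hbJ : j₂ + ℓ ∉ Finset.Ico i₁ (i₁ + m₁) ∪ Finset.Ico i₂ (i₂ + m₂) :=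
          hJ2 _ (Finset.mem_Ico.2 ⟨by omega, by beta_reduce; omega⟩)
        refine Or.inl ⟨by beta_reduce; rw [if_pos hmI]; omega, ?_⟩
        beta_reduce
        rw [if_pos hmU, if_neg hbJ]
        omega
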